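/- For real c,s,γ with c > γ > 0 and s > 0, define ℓ(z) = max( cs/z, min_{1≤x≤γ} ((c−x)z + xs/z) ) for z > 0. Then the infimum of ℓ over z > 0 equals (c−γ)·M + sγ/M, where M = max(√(sγ/(c−γ)), √s). -/

import Mathlib

/-- For reals `c > γ ≥ 1` and `s > 0`, the infimum over `z > 0` of
`ℓ(z) = max(cs/z, min_{1 ≤ x ≤ γ}((c-x)z + xs/z))` equals `(c-γ)M + sγ/M` where
`M = max(√(sγ/(c-γ)), √s)`. -/
theorem inf_counting_function (c s γ : ℝ) (hs : 0 < s) (hγ : 1 ≤ γ) (hcγ : γ < c) :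
    IsGLB
      ((fun z : ℝ => max (c * s / z)
          (sInf ((fun x : ℝ => (c - x) * z + x * s / z) '' Set.Icc 1 γ))) '' Set.Ioi 0)
      ((c - γ) * max (Real.sqrt (s * γ / (c - γ))) (Real.sqrt s) +
        s * γ / max (Real.sqrt (s * γ / (c - γ))) (Real.sqrt s)) := by
  have hcg : 0 < c - γ := by linarith
  set M : ℝ := max (Real.sqrt (s * γ / (c - γ))) (Real.sqrt s) with hMdef
  have hss : 0 < Real.sqrt s := Real.sqrt_pos.mpr hs
  have hMs : Real.sqrt s ≤ M := le_max_right _ _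
  have hM : 0 < M := lt_of_lt_of_le hss hMs
  have hM2s : s ≤ M ^ 2 := by
    nlinarith [Real.sq_sqrt hs.le, hMs, hss]
  have h2nn : (0:ℝ) ≤ s * γ / (c - γ) := by positivity
  have hM2 : s * γ / (c - γ) ≤ M ^ 2 := by
    have h1 : Real.sqrt (s * γ / (c - γ)) ≤ M := le_max_left _ _
    nlinarith [Real.sq_sqrt h2nn, Real.sqrt_nonneg (s * γ / (c - γ))]
  have hM2' : s * γ ≤ (c - γ) * M ^ 2 := by
    rw [div_le_iff₀ hcg] at hM2; linarith
  -- the inner infimum for z ≥ √s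
  have inner : ∀ z : ℝ, Real.sqrt s ≤ z →
      sInf ((fun x : ℝ => (c - x) * z + x * s / z) '' Set.Icc 1 γ)
        = (c - γ) * z + γ * s / z := by
    intro z hz
    have hzpos : 0 < z := lt_of_lt_of_le hss hz
    have hz2 : s ≤ z ^ 2 := by nlinarith [Real.sq_sqrt hs.le]
    have hdiv : s / z ≤ z := by rw [div_le_iff₀ hzpos]; nlinarith
    apply IsLeast.csInf_eq
    constructor
    · exact ⟨γ, ⟨hγ, le_refl γ⟩, rfl⟩
    · rintro y ⟨x, ⟨hx1, hx2⟩, rfl⟩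
      have hprod : 0 ≤ (γ - x) * (z - s / z) :=
        mul_nonneg (by linarith) (by linarith)
      have e1 : x * s / z = x * (s / z) := by ring
      have e2 : γ * s / z = γ * (s / z) := by ring
      simp only []
      rw [e1, e2]
      nlinarith [hprod]
  -- the key monotonicity: h(M) ≤ h(z) for z ≥ √s
  have hkey : ∀ z : ℝ, Real.sqrt s ≤ z →
      (c - γ) * M + s * γ / M ≤ (c - γ) * z + s * γ / z := by
    intro z hz
    have hzpos : 0 < z := lt_of_lt_of_le hss hz
    have hfac : 0 ≤ (z - M) * ((c - γ) * z * M - s * γ) := by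
      rcases le_total M z with h | h
      · apply mul_nonneg (by linarith)
        nlinarith [hM2', mul_nonneg (mul_nonneg (sub_nonneg.mpr h) hM.le) hcg.le]
      · rcases max_cases (Real.sqrt (s * γ / (c - γ))) (Real.sqrt s) with ⟨he, hge⟩ | ⟨he, hge⟩
        · have hsq : M ^ 2 = s * γ / (c - γ) := by rw [hMdef, he]; exact Real.sq_sqrt h2nn
          have heq : (c - γ) * M ^ 2 = s * γ := by rw [hsq]; field_simp
          nlinarith [sq_nonneg (z - M), heq, mul_nonneg (mul_nonneg hcg.le hM.le) (sq_nonneg (z - M))]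
        · have hzM : z = M := le_antisymm h (by rw [hMdef, he]; exact hz)
          simp [hzM]
    rw [← sub_nonneg]
    have hexp : (c - γ) * z + s * γ / z - ((c - γ) * M + s * γ / M)
        = (z - M) * ((c - γ) * z * M - s * γ) / (z * M) := by
      field_simp; ring
    rw [hexp]
    exact div_nonneg hfac (by positivity)
  -- cs/M ≤ target
  have hcsM : c * s / M ≤ (c - γ) * M + s * γ / M := by
    rw [← sub_nonneg]
    have hexp : (c - γ) * M + s * γ / M - c * s / M
        = ((c - γ) * M ^ 2 + s * γ - c * s) / M := by
      field_simp
    rw [hexp]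
    apply div_nonneg _ hM.le
    nlinarith [mul_nonneg hcg.le (sub_nonneg.mpr hM2s)]
  -- target ≤ c√s
  have hroot : c * s / Real.sqrt s = c * Real.sqrt s := by
    rw [mul_div_assoc, Real.div_sqrt]
  have hT_le : (c - γ) * M + s * γ / M ≤ c * Real.sqrt s := by
    have hk := hkey (Real.sqrt s) le_rfl
    have h2 : s * γ / Real.sqrt s = γ * Real.sqrt s := by
      rw [mul_comm s γ, mul_div_assoc, Real.div_sqrt]
    rw [h2] at hk
    nlinarith [hk]
  apply IsLeast.isGLB
  constructor
  · refine ⟨M, Set.mem_Ioi.mpr hM, ?_⟩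
    simp only []
    rw [inner M hMs]
    have e : γ * s / M = s * γ / M := by ring
    rw [e, max_eq_right hcsM]
  · rintro y ⟨z, hz, rfl⟩
    have hzpos : 0 < z := hz
    simp only []
    rcases le_total z (Real.sqrt s) with h | h
    · have h1 : c * s / Real.sqrt s ≤ c * s / z := by
        apply div_le_div_of_nonneg_left (by nlinarith : (0:ℝ) ≤ c * s) hzpos h
      refine le_trans ?_ (le_max_left _ _)
      calc (c - γ) * M + s * γ / M ≤ c * Real.sqrt s := hT_le
        _ = c * s / Real.sqrt s := hroot.symm
        _ ≤ c * s / z := h1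
    · rw [inner z h]
      have e : γ * s / z = s * γ / z := by ring
      rw [e]
      exact le_trans (hkey z h) (le_max_right _ _)
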